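/- Suppose φ is a C³ function on [x_l, x_r] satisfying φ''' + F_0 φ'' + F_0'' φ = r with φ(x_l) = φ'(x_l) = φ''(x_l) = 0, where F_0 ≥ 0 and F_0'' ≥ 0 on [x_l, x_r]. Then sup_{x ∈ [x_l, x_r]} |φ''(x)| ≤ (x_r − x_l)^{1/2} · sup_{[x_l,x_r]} |r| · exp( (1/2) ∫_{x_l}^{x_r} Q(y) dy ), where Q(x) = F_0''(x) − 2F_0(x) + 1 + ((x−x_l)^4/4) F_0''(x) when F_0'' − 2F_0 + 1 ≥ 0, and Q(x) = ((x−x_l)^4/4) F_0''(x) otherwise. -/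

import Mathlib

open Set intervalIntegral

set_option maxHeartbeats 1000000 in
/-- Energy bound for the inhomogeneous problem with zero initial data:
`sup |φ''| ≤ (x_r - x_l)^{1/2} · sup|r| · exp((1/2)∫ Q)`. -/
theorem stmt_5 (xl xr : ℝ) (hx : xl ≤ xr) (φ F₀ r : ℝ → ℝ)
    (hφ : ContDiff ℝ 3 φ) (hF₀ : ContDiff ℝ 2 F₀) (hr : ContinuousOn r (Icc xl xr))
    (hF₀pos : ∀ x ∈ Icc xl xr, 0 ≤ F₀ x)
    (hF₀''pos : ∀ x ∈ Icc xl xr, 0 ≤ deriv^[2] F₀ x)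
    (hODE : ∀ x ∈ Icc xl xr,
      deriv^[3] φ x + F₀ x * deriv^[2] φ x + deriv^[2] F₀ x * φ x = r x)
    (h0 : φ xl = 0) (h1 : deriv φ xl = 0) (h2 : deriv^[2] φ xl = 0) :
    ∀ x ∈ Icc xl xr,
      |deriv^[2] φ x| ≤
        (xr - xl) ^ ((1 : ℝ) / 2) * sSup ((fun y => |r y|) '' Icc xl xr) *
        Real.exp ((1 / 2) * ∫ y in xl..xr,
          if deriv^[2] F₀ y - 2 * F₀ y + 1 ≥ 0 then
            deriv^[2] F₀ y - 2 * F₀ y + 1 + ((y - xl) ^ 4 / 4) * deriv^[2] F₀ y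
          else ((y - xl) ^ 4 / 4) * deriv^[2] F₀ y) := by
  -- Abbreviations
  set ψ : ℝ → ℝ := deriv (deriv φ) with hψdef
  set F₂ : ℝ → ℝ := deriv (deriv F₀) with hF₂def
  have hψeq : deriv^[2] φ = ψ := by
    rw [Function.iterate_succ_apply', Function.iterate_one]
  have hF₂eq : deriv^[2] F₀ = F₂ := by
    rw [Function.iterate_succ_apply', Function.iterate_one]
  have hψ3eq : deriv^[3] φ = deriv ψ := by
    rw [Function.iterate_succ_apply', hψeq]
  rw [hψeq] at h2 ⊢
  rw [hF₂eq] at hF₀''pos ⊢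
  -- smoothness facts
  have hφd : Differentiable ℝ φ := hφ.differentiable (by norm_num)
  have hφ'C : ContDiff ℝ 2 (deriv φ) := by
    have h := hφ.iterate_deriv' 2 1
    simpa using h
  have hφ'd : Differentiable ℝ (deriv φ) := hφ'C.differentiable (by norm_num)
  have hψC : ContDiff ℝ 1 ψ := by
    have h := hφ.iterate_deriv' 1 2
    rwa [hψeq] at h
  have hψd : Differentiable ℝ ψ := hψC.differentiable (by norm_num)
  have hψc : Continuous ψ := hψd.continuous
  have hF₂c : Continuous F₂ := by
    have h := hF₀.iterate_deriv' 0 2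
    rw [hF₂eq] at h
    exact h.continuous
  have hF₀c : Continuous F₀ := hF₀.continuous
  -- the ODE in convenient form
  have hode : ∀ x ∈ Icc xl xr, deriv ψ x = r x - F₀ x * ψ x - F₂ x * φ x := by
    intro x hxx
    have h := hODE x hxx
    rw [hψ3eq, hψeq, hF₂eq] at h
    linarith
  -- the coefficient Q
  set Q : ℝ → ℝ := fun y => max (F₂ y - 2 * F₀ y + 1) 0 + (y - xl) ^ 4 / 4 * F₂ y with hQdef
  have hQeq : ∀ y, (if F₂ y - 2 * F₀ y + 1 ≥ 0 then
      F₂ y - 2 * F₀ y + 1 + ((y - xl) ^ 4 / 4) * F₂ y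
      else ((y - xl) ^ 4 / 4) * F₂ y) = Q y := by
    intro y
    by_cases h : F₂ y - 2 * F₀ y + 1 ≥ 0
    · rw [if_pos h]; simp only [hQdef, max_eq_left h]
    · rw [if_neg h]; push_neg at h; simp only [hQdef, max_eq_right h.le]; ring
  have hQc : Continuous Q := by
    apply Continuous.add
    · exact ((hF₂c.sub (continuous_const.mul hF₀c)).add continuous_const).max continuous_const
    · exact (((continuous_id.sub continuous_const).pow 4).div_const 4).mul hF₂c
  have hQpos : ∀ y ∈ Icc xl xr, 0 ≤ Q y := by
    intro y hy
    have ha : (0:ℝ) ≤ max (F₂ y - 2 * F₀ y + 1) 0 := le_max_right _ _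
    have hb : (0:ℝ) ≤ (y - xl) ^ 4 / 4 * F₂ y := by
      have := hF₀''pos y hy
      positivity
    simp only [hQdef]; linarith
  set I : ℝ → ℝ := fun x => ∫ y in xl..x, Q y with hIdef
  have hI : ∀ x, HasDerivAt I (Q x) x := fun x =>
    (hQc.integral_hasStrictDerivAt xl x).hasDerivAt
  have hIc : Continuous I :=
    continuous_iff_continuousAt.mpr fun x => (hI x).continuousAt
  have hImono : ∀ a b, xl ≤ a → a ≤ b → b ≤ xr → I a ≤ I b := by
    intro a b hla hab hbr
    have hadd : (∫ y in xl..a, Q y) + ∫ y in a..b, Q y = ∫ y in xl..b, Q y :=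
      integral_add_adjacent_intervals (hQc.intervalIntegrable _ _) (hQc.intervalIntegrable _ _)
    have hpos : 0 ≤ ∫ y in a..b, Q y := by
      apply intervalIntegral.integral_nonneg hab
      intro u hu
      exact hQpos u ⟨hla.trans hu.1, hu.2.trans hbr⟩
    simp only [hIdef]
    linarith [hadd]
  have hI0 : I xl = 0 := integral_same
  -- the sup of |r|
  set S : ℝ := sSup ((fun y => |r y|) '' Icc xl xr) with hSdef
  have hSb : ∀ x ∈ Icc xl xr, |r x| ≤ S := by
    intro x hxx
    apply le_csSup
    · exact (isCompact_Icc.image_of_continuousOn hr.abs).bddAbove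
    · exact mem_image_of_mem _ hxx
  have hS0 : 0 ≤ S := le_trans (abs_nonneg _) (hSb xl ⟨le_rfl, hx⟩)
  -- the energy
  set E : ℝ → ℝ := fun x => ψ x ^ 2 with hEdef
  have hE' : ∀ x, HasDerivAt E (2 * ψ x * deriv ψ x) x := by
    intro x
    have h : HasDerivAt (fun y => ψ y ^ 2) _ x := ((hψd x).hasDerivAt).pow 2
    simpa [mul_comm] using h
  have hEc : Continuous E := hψc.pow 2
  -- Main Grönwall-type estimate (with a slack ε, by a first-crossing argument)
  have key : ∀ ε : ℝ, 0 < ε → ∀ x ∈ Icc xl xr,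
      E x ≤ (ε + (S ^ 2 + ε) * (x - xl)) * Real.exp (I x) := by
    intro ε hε
    by_contra hcon
    push_neg at hcon
    obtain ⟨x₀, hx₀, hx₀lt⟩ := hcon
    set u : ℝ → ℝ := fun x => (ε + (S ^ 2 + ε) * (x - xl)) * Real.exp (I x) with hudef
    set g : ℝ → ℝ := fun x => E x - u x with hgdef
    have huc : Continuous u := by
      apply Continuous.mul
      · exact continuous_const.add (continuous_const.mul (continuous_id.sub continuous_const))
      · exact Real.continuous_exp.comp hIc
    have hgc : Continuous g := hEc.sub huc
    have hu' : ∀ x, HasDerivAt u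
        ((S ^ 2 + ε) * Real.exp (I x) + (ε + (S ^ 2 + ε) * (x - xl)) * (Q x * Real.exp (I x))) x := by
      intro x
      have ha : HasDerivAt (fun x : ℝ => ε + (S ^ 2 + ε) * (x - xl)) (S ^ 2 + ε) x := by
        have h := ((hasDerivAt_id x).sub_const xl).const_mul (S ^ 2 + ε)
        simpa using h.const_add ε
      have hb : HasDerivAt (fun x => Real.exp (I x)) (Q x * Real.exp (I x)) x := by
        have h := (hI x).exp
        rw [mul_comm] at h
        exact h
      exact ha.mul hb
    set A : Set ℝ := Icc xl x₀ ∩ {x | 0 ≤ g x} with hAdef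
    have hx₀A : x₀ ∈ A := ⟨⟨hx₀.1, le_rfl⟩, le_of_lt (show (0:ℝ) < E x₀ - u x₀ from by show (0:ℝ) < E x₀ - (ε + (S ^ 2 + ε) * (x₀ - xl)) * Real.exp (I x₀); linarith)⟩
    have hAc : IsClosed A := isClosed_Icc.inter (isClosed_le continuous_const hgc)
    have hAb : BddBelow A := ⟨xl, fun y hy => hy.1.1⟩
    set t : ℝ := sInf A with htdef
    have htA : t ∈ A := hAc.csInf_mem ⟨x₀, hx₀A⟩ hAb
    have htl : xl ≤ t := htA.1.1
    have htx₀ : t ≤ x₀ := htA.1.2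
    have htr : t ≤ xr := htx₀.trans hx₀.2
    have htIcc : t ∈ Icc xl xr := ⟨htl, htr⟩
    have hgxl : g xl < 0 := by
      show ψ xl ^ 2 - (ε + (S ^ 2 + ε) * (xl - xl)) * Real.exp (I xl) < 0
      rw [h2, hI0]
      simp only [Real.exp_zero]
      nlinarith [hε]
    have hxlt : xl < t := by
      rcases lt_or_eq_of_le htl with h | h
      · exact h
      · exfalso; rw [← h] at htA; have := htA.2; simp only [mem_setOf_eq] at this; linarith
    have hlt : ∀ s, xl ≤ s → s < t → g s < 0 := by
      intro s hs hst
      by_contra hcon2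
      push_neg at hcon2
      have : s ∈ A := ⟨⟨hs, hst.le.trans htx₀⟩, hcon2⟩
      exact absurd (csInf_le hAb this) (not_le.mpr hst)
    have hgt : g t = 0 := by
      refine le_antisymm ?_ htA.2
      have htend : Filter.Tendsto g (nhdsWithin t (Iio t)) (nhds (g t)) :=
        (hgc.continuousAt).continuousWithinAt
      have hev : ∀ᶠ s in nhdsWithin t (Iio t), g s ≤ 0 := by
        filter_upwards [Ioo_mem_nhdsLT_of_mem (show t ∈ Ioc xl t from ⟨hxlt, le_rfl⟩)]
          with s hs
        exact (hlt s hs.1.le hs.2).le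
      exact le_of_tendsto htend hev
    have hut : E t = u t := by
      have h : E t - u t = 0 := hgt
      linarith
    have hut0 : 0 ≤ u t := by
      rw [← hut]
      exact sq_nonneg _
    -- monotonicity of u on [xl, t]
    have husm : ∀ s ∈ Icc xl t, u s ≤ u t := by
      intro s hs
      simp only [hudef]
      have ha : ε + (S ^ 2 + ε) * (s - xl) ≤ ε + (S ^ 2 + ε) * (t - xl) := by
        nlinarith [hs.2, sq_nonneg S]
      have hb : Real.exp (I s) ≤ Real.exp (I t) :=
        Real.exp_le_exp.mpr (hImono s t hs.1 hs.2 htr)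
      have hc : (0:ℝ) ≤ ε + (S ^ 2 + ε) * (s - xl) := by nlinarith [hs.1, sq_nonneg S]
      exact mul_le_mul ha hb (Real.exp_pos _).le (by nlinarith [hs.1, hs.2, sq_nonneg S])
    have hEsm : ∀ s ∈ Icc xl t, E s ≤ u t := by
      intro s hs
      rcases lt_or_eq_of_le hs.2 with h | h
      · have hgs : E s - u s < 0 := hlt s hs.1 h
        have hus := husm s hs
        linarith
      · rw [h, hut]
    -- pointwise bound on ψ, then on φ', then on φ
    set m : ℝ := Real.sqrt (u t) with hmdef
    have hm0 : 0 ≤ m := Real.sqrt_nonneg _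
    have hm2 : m ^ 2 = u t := Real.sq_sqrt hut0
    have hψm : ∀ s ∈ Icc xl t, |ψ s| ≤ m := by
      intro s hs
      have ha : ψ s ^ 2 ≤ u t := hEsm s hs
      have hb := Real.sqrt_le_sqrt ha
      rwa [Real.sqrt_sq_eq_abs] at hb
    have hφ'm : ∀ s ∈ Icc xl t, |deriv φ s| ≤ m * (s - xl) := by
      intro s hs
      have h := norm_image_sub_le_of_norm_deriv_le_segment'
        (f := deriv φ) (f' := ψ) (a := xl) (b := t)
        (fun x hxx => ((hφ'd x).hasDerivAt).hasDerivWithinAt)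
        (fun x hxx => hψm x ⟨hxx.1, hxx.2.le⟩) s hs
      rw [h1] at h
      simpa using h
    have hφt : |φ t| ≤ m * ((t - xl) ^ 2 / 2) := by
      have hftc : ∫ s in xl..t, deriv φ s = φ t - φ xl := by
        apply integral_deriv_eq_sub (fun x _ => hφd x)
        exact (hφ.continuous_deriv (by norm_num)).intervalIntegrable _ _
      have habs : |∫ s in xl..t, deriv φ s| ≤ ∫ s in xl..t, |deriv φ s| :=
        intervalIntegral.abs_integral_le_integral_abs hxlt.le
      have hmono : (∫ s in xl..t, |deriv φ s|) ≤ ∫ s in xl..t, m * (s - xl) := by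
        apply intervalIntegral.integral_mono_on hxlt.le
        · exact ((hφ.continuous_deriv (by norm_num)).abs).intervalIntegrable _ _
        · exact (continuous_const.mul (continuous_id.sub continuous_const)).intervalIntegrable _ _
        · exact fun s hs => hφ'm s hs
      have hcomp : (∫ s in xl..t, m * (s - xl)) = m * ((t - xl) ^ 2 / 2) := by
        rw [intervalIntegral.integral_const_mul]
        have hid : (∫ s in xl..t, (s - xl)) = (t - xl) ^ 2 / 2 := by
          rw [intervalIntegral.integral_sub intervalIntegrable_id intervalIntegrable_const]
          simp [integral_id]
          ring
        rw [hid]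
      rw [hftc, h0, sub_zero] at habs
      calc |φ t| ≤ ∫ s in xl..t, |deriv φ s| := habs
        _ ≤ ∫ s in xl..t, m * (s - xl) := hmono
        _ = m * ((t - xl) ^ 2 / 2) := hcomp
    have hφt2 : φ t ^ 2 ≤ (t - xl) ^ 4 / 4 * u t := by
      have h := mul_self_le_mul_self (abs_nonneg (φ t)) hφt
      have habs : φ t ^ 2 = |φ t| * |φ t| := by
        rw [← abs_mul, abs_of_nonneg (mul_self_nonneg _), sq]
      calc φ t ^ 2 = |φ t| * |φ t| := habs
        _ ≤ (m * ((t - xl) ^ 2 / 2)) * (m * ((t - xl) ^ 2 / 2)) := h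
        _ = (t - xl) ^ 4 / 4 * m ^ 2 := by ring
        _ = (t - xl) ^ 4 / 4 * u t := by rw [hm2]
    -- derivative comparison at t
    have hder : deriv ψ t = r t - F₀ t * ψ t - F₂ t * φ t := hode t htIcc
    have hEt' : 2 * ψ t * deriv ψ t ≤ Q t * u t + S ^ 2 := by
      rw [hder]
      have hc : 0 ≤ F₂ t := hF₀''pos t htIcc
      have hf : 0 ≤ F₀ t := hF₀pos t htIcc
      have hrS : |r t| ≤ S := hSb t htIcc
      have hr2 : r t ^ 2 ≤ S ^ 2 := by
        nlinarith [abs_nonneg (r t), neg_abs_le (r t), le_abs_self (r t)]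
      have hp2 : ψ t ^ 2 = u t := hut
      have e4 : (F₂ t - 2 * F₀ t + 1) * (ψ t ^ 2) ≤ max (F₂ t - 2 * F₀ t + 1) 0 * u t := by
        rw [hp2]
        exact mul_le_mul_of_nonneg_right (le_max_left _ _) hut0
      have e5 : F₂ t * φ t ^ 2 ≤ F₂ t * ((t - xl) ^ 4 / 4 * u t) :=
        mul_le_mul_of_nonneg_left hφt2 hc
      have hQt : Q t = max (F₂ t - 2 * F₀ t + 1) 0 + (t - xl) ^ 4 / 4 * F₂ t := rfl
      have e1 : 2 * ψ t * (r t - F₀ t * ψ t - F₂ t * φ t)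
          ≤ (F₂ t - 2 * F₀ t + 1) * ψ t ^ 2 + S ^ 2 + F₂ t * φ t ^ 2 := by
        nlinarith [sq_nonneg (ψ t - r t), mul_nonneg hc (sq_nonneg (ψ t + φ t)), hr2]
      calc 2 * ψ t * (r t - F₀ t * ψ t - F₂ t * φ t)
          ≤ (F₂ t - 2 * F₀ t + 1) * ψ t ^ 2 + S ^ 2 + F₂ t * φ t ^ 2 := e1
        _ ≤ max (F₂ t - 2 * F₀ t + 1) 0 * u t + S ^ 2 + F₂ t * ((t - xl) ^ 4 / 4 * u t) := by
            linarith [e4, e5]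
        _ = Q t * u t + S ^ 2 := by rw [hQt]; ring
    -- the comparison derivative is strictly bigger
    set d : ℝ := (S ^ 2 + ε) * Real.exp (I t) +
      (ε + (S ^ 2 + ε) * (t - xl)) * (Q t * Real.exp (I t)) with hddef
    have hdgt : Q t * u t + S ^ 2 < d := by
      have hexp1 : 1 ≤ Real.exp (I t) := by
        rw [← Real.exp_zero]
        apply Real.exp_le_exp.mpr
        rw [← hI0]
        exact hImono xl t le_rfl htl htr
      have hterm : (ε + (S ^ 2 + ε) * (t - xl)) * (Q t * Real.exp (I t)) = Q t * u t := by
        simp only [hudef]; ring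
      have hge : S ^ 2 + ε ≤ (S ^ 2 + ε) * Real.exp (I t) := by
        nlinarith [sq_nonneg S]
      simp only [hddef]
      rw [hterm]
      linarith
    -- derivative of g at t is negative ...
    have hg' : HasDerivAt g (2 * ψ t * deriv ψ t - d) t := (hE' t).sub (hu' t)
    have hneg : 2 * ψ t * deriv ψ t - d < 0 := by linarith
    -- ... but the left slopes are nonnegative
    have hpos : 0 ≤ 2 * ψ t * deriv ψ t - d := by
      have hslope := hasDerivAt_iff_tendsto_slope.mp hg'
      have hmono : nhdsWithin t (Iio t) ≤ nhdsWithin t ({t}ᶜ) :=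
        nhdsWithin_mono t (fun s hs => ne_of_lt hs)
      have htend : Filter.Tendsto (slope g t) (nhdsWithin t (Iio t))
          (nhds (2 * ψ t * deriv ψ t - d)) := hslope.mono_left hmono
      apply ge_of_tendsto htend
      filter_upwards [Ioo_mem_nhdsLT_of_mem (show t ∈ Ioc xl t from ⟨hxlt, le_rfl⟩)] with s hs
      have hgs : g s ≤ 0 := (hlt s hs.1.le hs.2).le
      rw [slope_def_field, hgt, sub_zero]
      exact div_nonneg_iff.mpr (Or.inr ⟨hgs, by linarith [hs.2]⟩)
    linarith
  -- remove the ε and take the sup bound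
  have hE2 : ∀ x ∈ Icc xl xr, E x ≤ S ^ 2 * (xr - xl) * Real.exp (I xr) := by
    intro x hxx
    have hb1 : E x ≤ S ^ 2 * (x - xl) * Real.exp (I x) := by
      by_contra hcon
      push_neg at hcon
      set C : ℝ := (1 + (x - xl)) * Real.exp (I x) with hC
      have hCpos : 0 < C := by
        have : (0:ℝ) < 1 + (x - xl) := by linarith [hxx.1]
        positivity
      set ε : ℝ := (E x - S ^ 2 * (x - xl) * Real.exp (I x)) / (2 * C) with hεdef
      have hεpos : 0 < ε := by
        apply div_pos (by linarith) (by linarith)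
      have h := key ε hεpos x hxx
      have hexpand : (ε + (S ^ 2 + ε) * (x - xl)) * Real.exp (I x)
          = S ^ 2 * (x - xl) * Real.exp (I x) + ε * C := by
        simp only [hC]; ring
      have hεC : ε * C = (E x - S ^ 2 * (x - xl) * Real.exp (I x)) / 2 := by
        rw [hεdef]
        field_simp
      rw [hexpand, hεC] at h
      linarith
    have hb2 : S ^ 2 * (x - xl) * Real.exp (I x) ≤ S ^ 2 * (xr - xl) * Real.exp (I xr) := by
      have e1 : Real.exp (I x) ≤ Real.exp (I xr) :=
        Real.exp_le_exp.mpr (hImono x xr hxx.1 hxx.2 le_rfl)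
      have e2 : S ^ 2 * (x - xl) ≤ S ^ 2 * (xr - xl) := by
        nlinarith [sq_nonneg S, hxx.2]
      have e3 : 0 ≤ S ^ 2 * (x - xl) := by nlinarith [sq_nonneg S, hxx.1]
      calc S ^ 2 * (x - xl) * Real.exp (I x) ≤ S ^ 2 * (x - xl) * Real.exp (I xr) := by
            exact mul_le_mul_of_nonneg_left e1 e3
        _ ≤ S ^ 2 * (xr - xl) * Real.exp (I xr) :=
            mul_le_mul_of_nonneg_right e2 (Real.exp_pos _).le
    linarith
  -- conclusion
  intro x hxx
  have hint : (∫ y in xl..xr, if F₂ y - 2 * F₀ y + 1 ≥ 0 then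
      F₂ y - 2 * F₀ y + 1 + ((y - xl) ^ 4 / 4) * F₂ y
      else ((y - xl) ^ 4 / 4) * F₂ y) = I xr :=
    intervalIntegral.integral_congr (fun y _ => hQeq y)
  rw [hint]
  have hEx : E x ≤ S ^ 2 * (xr - xl) * Real.exp (I xr) := hE2 x hxx
  have habs : |ψ x| = Real.sqrt (E x) := (Real.sqrt_sq_eq_abs _).symm
  have hsq : Real.sqrt (E x) ≤ Real.sqrt (S ^ 2 * (xr - xl) * Real.exp (I xr)) :=
    Real.sqrt_le_sqrt hEx
  have hrhs : Real.sqrt (S ^ 2 * (xr - xl) * Real.exp (I xr))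
      = (xr - xl) ^ ((1 : ℝ) / 2) * S * Real.exp (1 / 2 * I xr) := by
    rw [show (1:ℝ) / 2 * I xr = I xr / 2 by ring]
    rw [Real.sqrt_mul (mul_nonneg (sq_nonneg S) (by linarith : (0:ℝ) ≤ xr - xl)), Real.sqrt_mul (sq_nonneg S),
      Real.sqrt_sq hS0, ← Real.exp_half, Real.sqrt_eq_rpow]
    ring
  rw [habs]
  rw [hrhs] at hsq
  exact hsq
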